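/- Let H be a holomorphic Hilbert bundle (e.g., trivial bundle U × H with U ⊆ ℂᵐ open) with smooth hermitian metric h, Chern connection D = δ + ∂̄ and curvature Θ, and let H₀ be a closed subbundle admitting Chern connection D₀ = δ₀ + ∂̄ with curvature Θ₀. Let S := δ − δ₀ be the second fundamental form. Then for all smooth local sections u, v of H₀: h(Θ₀ u, v) = h(Θ u, v) − h(Su, Sv). -/

import Mathlib

lemma fderiv_mem_of_closed' {E H : Type*} [NormedAddCommGroup E] [NormedSpace ℝ E]
    [NormedAddCommGroup H] [NormedSpace ℂ H]
    (H₀ : Submodule ℂ H) (hH₀ : IsClosed (H₀ : Set H))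
    {U : Set E} (hU : IsOpen U) {f : E → H} {t : E}
    (hf : DifferentiableAt ℝ f t)
    (hmem : ∀ s ∈ U, f s ∈ H₀) (ht : t ∈ U) (z : E) :
    fderiv ℝ f t z ∈ H₀ := by
  set g : ℝ → H := fun s => f (s • z + t) with hg
  have hf' : HasFDerivAt f (fderiv ℝ f t) ((0:ℝ) • z + t) := by
    simpa using hf.hasFDerivAt
  have h1 : HasDerivAt (fun s : ℝ => s • z + t) z 0 := by
    simpa using ((hasDerivAt_id (0:ℝ)).smul_const z).add_const t
  have hline : HasDerivAt g (fderiv ℝ f t z) 0 := hf'.comp_hasDerivAt 0 h1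
  have hslope := hasDerivAt_iff_tendsto_slope.mp hline
  refine hH₀.mem_of_tendsto hslope ?_
  have hcont : ContinuousAt (fun s : ℝ => s • z + t) 0 :=
    ((continuous_id.smul continuous_const).add continuous_const).continuousAt
  have hnb : ∀ᶠ s : ℝ in nhds 0, s • z + t ∈ U := hcont (by simpa using hU.mem_nhds ht)
  filter_upwards [nhdsWithin_le_nhds hnb] with s hs
  have h0 : g 0 ∈ H₀ := by simpa [hg] using hmem t ht
  have hsmem : g s ∈ H₀ := hmem _ hs
  simpa [slope_def_module] using H₀.smul_of_tower_mem (s - 0)⁻¹ (H₀.sub_mem hsmem h0)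

/-- The (1,0)-part of the real Fréchet derivative of `u` at `t` in direction `z`:
`∂u(z) = ½(Du(z) − i·Du(i·z))`. -/
noncomputable def del {E F : Type*} [NormedAddCommGroup E] [NormedSpace ℂ E]
    [NormedAddCommGroup F] [NormedSpace ℂ F] (u : E → F) (t z : E) : F :=
  (2⁻¹ : ℂ) • (fderiv ℝ u t z - Complex.I • fderiv ℝ u t (Complex.I • z))

/-- The (0,1)-part of the real Fréchet derivative of `u` at `t` in direction `z`:
`∂̄u(z) = ½(Du(z) + i·Du(i·z))`. -/
noncomputable def delbar {E F : Type*} [NormedAddCommGroup E] [NormedSpace ℂ E]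
    [NormedAddCommGroup F] [NormedSpace ℂ F] (u : E → F) (t z : E) : F :=
  (2⁻¹ : ℂ) • (fderiv ℝ u t z + Complex.I • fderiv ℝ u t (Complex.I • z))
/-- The `(z, z̄')`-component of the Chern curvature `Θ = δ∂̄ + ∂̄δ` (as a `(1,1)`-form),
i.e. `Θ_{z z̄'} u = δ_z(∂̄_{z'} u) − ∂̄_{z'}(δ_z u)`. -/
noncomputable def curvC {m : ℕ} {H : Type*} [NormedAddCommGroup H] [NormedSpace ℂ H]
    (δ : ((Fin m → ℂ) → H) → (Fin m → ℂ) → (Fin m → ℂ) → H)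
    (u : (Fin m → ℂ) → H) (t z z' : Fin m → ℂ) : H :=
  δ (fun s => delbar u s z') t z - delbar (fun s => δ u s z) t z'

/-- subbundle curvature formula: `h` a smooth hermitian metric on the trivial
bundle `U × H` with Chern connection `D = δ + ∂̄` and curvature `Θ`, `H₀` a closed subbundle
with Chern connection `D₀ = δ₀ + ∂̄` and curvature `Θ₀`, and `S = δ − δ₀` the second
fundamental form.  For all smooth `H₀`-valued sections `u, v` (componentwise in directions
`z, z'`): `h(Θ₀u, v) = h(Θu, v) − h(S_z u, S_{z'} v)`. -/
theorem statement_14 {m : ℕ} {H : Type*} [NormedAddCommGroup H] [NormedSpace ℂ H]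
    (U : Set (Fin m → ℂ)) (hU : IsOpen U)
    (H₀ : Submodule ℂ H) (hH₀ : IsClosed (H₀ : Set H))
    (h : (Fin m → ℂ) → H → H → ℂ)
    (hadd : ∀ t ∈ U, ∀ u v w' : H, h t (u + v) w' = h t u w' + h t v w')
    (hsub : ∀ t ∈ U, ∀ u v w' : H, h t (u - v) w' = h t u w' - h t v w')
    (hsmul : ∀ t ∈ U, ∀ (c : ℂ) (u v : H), h t (c • u) v = c * h t u v)
    (hsymm : ∀ t ∈ U, ∀ u v : H, h t u v = starRingEnd ℂ (h t v u))
    (hpos : ∀ t ∈ U, ∀ u : H, u ≠ 0 → 0 < (h t u u).re)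
    (δ δ₀ : ((Fin m → ℂ) → H) → (Fin m → ℂ) → (Fin m → ℂ) → H)
    -- `δ` is metric compatible and maps smooth sections to smooth forms:
    (hδ : ∀ u v : (Fin m → ℂ) → H, ContDiffOn ℝ (⊤ : ℕ∞) u U → ContDiffOn ℝ (⊤ : ℕ∞) v U →
      ∀ t ∈ U, ∀ z : Fin m → ℂ,
        del (fun s => h s (u s) (v s)) t z = h t (δ u t z) (v t) + h t (u t) (delbar v t z))
    (hδsm : ∀ u : (Fin m → ℂ) → H, ContDiffOn ℝ (⊤ : ℕ∞) u U →
      ∀ z : Fin m → ℂ, ContDiffOn ℝ (⊤ : ℕ∞) (fun t => δ u t z) U)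
    -- `δ₀` is the (1,0)-part of the Chern connection of the subbundle `H₀`:
    (hδ₀mem : ∀ u : (Fin m → ℂ) → H, ContDiffOn ℝ (⊤ : ℕ∞) u U → (∀ t ∈ U, u t ∈ H₀) →
      ∀ t ∈ U, ∀ z : Fin m → ℂ, δ₀ u t z ∈ H₀)
    (hδ₀sm : ∀ u : (Fin m → ℂ) → H, ContDiffOn ℝ (⊤ : ℕ∞) u U → (∀ t ∈ U, u t ∈ H₀) →
      ∀ z : Fin m → ℂ, ContDiffOn ℝ (⊤ : ℕ∞) (fun t => δ₀ u t z) U)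
    (hδ₀ : ∀ u v : (Fin m → ℂ) → H, ContDiffOn ℝ (⊤ : ℕ∞) u U → (∀ t ∈ U, u t ∈ H₀) →
      ContDiffOn ℝ (⊤ : ℕ∞) v U → (∀ t ∈ U, v t ∈ H₀) →
      ∀ t ∈ U, ∀ z : Fin m → ℂ,
        del (fun s => h s (u s) (v s)) t z = h t (δ₀ u t z) (v t) + h t (u t) (delbar v t z)) :
    ∀ u v : (Fin m → ℂ) → H, ContDiffOn ℝ (⊤ : ℕ∞) u U → (∀ t ∈ U, u t ∈ H₀) →
      ContDiffOn ℝ (⊤ : ℕ∞) v U → (∀ t ∈ U, v t ∈ H₀) →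
      ∀ t ∈ U, ∀ z z' : Fin m → ℂ,
        h t (curvC δ₀ u t z z') (v t)
          = h t (curvC δ u t z z') (v t)
            - h t (δ u t z - δ₀ u t z) (δ v t z' - δ₀ v t z') := by
  intro u v hu humem hv hvmem t ht z z'
  -- basic differentiability facts
  have hdiff : ∀ f : (Fin m → ℂ) → H, ContDiffOn ℝ (⊤ : ℕ∞) f U → ∀ s ∈ U,
      DifferentiableAt ℝ f s :=
    fun f hf s hs => (hf.contDiffAt (hU.mem_nhds hs)).differentiableAt (by simp)
  have hfd_sm : ∀ f : (Fin m → ℂ) → H, ContDiffOn ℝ (⊤ : ℕ∞) f U → ∀ w : Fin m → ℂ,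
      ContDiffOn ℝ (⊤ : ℕ∞) (fun s => fderiv ℝ f s w) U :=
    fun f hf w => (hf.fderiv_of_isOpen hU (by exact_mod_cast le_top)).clm_apply contDiffOn_const
  have hdelbar_sm : ∀ f : (Fin m → ℂ) → H, ContDiffOn ℝ (⊤ : ℕ∞) f U → ∀ w : Fin m → ℂ,
      ContDiffOn ℝ (⊤ : ℕ∞) (fun s => delbar f s w) U := by
    intro f hf w
    simp only [delbar]
    exact (((hfd_sm f hf w).add ((hfd_sm f hf (Complex.I • w)).const_smul
      Complex.I)).const_smul (2⁻¹ : ℂ))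
  have hdelbar_mem : ∀ f : (Fin m → ℂ) → H, ContDiffOn ℝ (⊤ : ℕ∞) f U →
      (∀ s ∈ U, f s ∈ H₀) → ∀ s ∈ U, ∀ w : Fin m → ℂ, delbar f s w ∈ H₀ := by
    intro f hf hm s hs w
    exact H₀.smul_mem _ (H₀.add_mem
      (fderiv_mem_of_closed' H₀ hH₀ hU (hdiff f hf s hs) hm hs w)
      (H₀.smul_mem _ (fderiv_mem_of_closed' H₀ hH₀ hU (hdiff f hf s hs) hm hs _)))
  -- orthogonality of the second fundamental form
  have orth : ∀ a b : (Fin m → ℂ) → H, ContDiffOn ℝ (⊤ : ℕ∞) a U → (∀ s ∈ U, a s ∈ H₀) →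
      ContDiffOn ℝ (⊤ : ℕ∞) b U → (∀ s ∈ U, b s ∈ H₀) → ∀ s ∈ U, ∀ w : Fin m → ℂ,
      h s (δ a s w - δ₀ a s w) (b s) = 0 := by
    intro a b ha hma hb hmb s hs w
    have e1 := hδ a b ha hb s hs w
    have e2 := hδ₀ a b ha hma hb hmb s hs w
    rw [hsub s hs]
    linear_combination e2 - e1
  -- `del` of a function vanishing on `U`
  have delzero : ∀ f : (Fin m → ℂ) → ℂ, (∀ s ∈ U, f s = 0) → ∀ w : Fin m → ℂ,
      del f t w = 0 := by
    intro f hf w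
    have heq : f =ᶠ[nhds t] (fun _ => (0 : ℂ)) :=
      Filter.eventuallyEq_of_mem (hU.mem_nhds ht) hf
    have hd : fderiv ℝ f t = fderiv ℝ (fun _ => (0 : ℂ)) t := heq.fderiv_eq
    simp [del, hd]
  -- second-slot subtraction
  have hsub2 : ∀ a b c : H, h t a (b - c) = h t a b - h t a c := by
    intro a b c
    rw [hsymm t ht, hsub t ht, map_sub, ← hsymm t ht, ← hsymm t ht]
  -- abbreviations
  have hA_sm : ContDiffOn ℝ (⊤ : ℕ∞) (fun s => delbar u s z') U := hdelbar_sm u hu z'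
  have hA_mem : ∀ s ∈ U, delbar u s z' ∈ H₀ := fun s hs => hdelbar_mem u hu humem s hs z'
  have hw_sm : ContDiffOn ℝ (⊤ : ℕ∞) (fun s => δ u s z - δ₀ u s z) U :=
    (hδsm u hu z).sub (hδ₀sm u hu humem z)
  -- E3 : h(δA,v) = h(δ₀A,v)
  have E3 : h t (δ (fun s => delbar u s z') t z) (v t)
      = h t (δ₀ (fun s => delbar u s z') t z) (v t) := by
    have := orth (fun s => delbar u s z') v hA_sm hA_mem hv hvmem t ht z
    rw [hsub t ht] at this
    linear_combination this
  -- Edb : delbar of the difference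
  have hdsub : ∀ w : Fin m → ℂ, fderiv ℝ (fun s => δ u s z - δ₀ u s z) t w
      = fderiv ℝ (fun s => δ u s z) t w - fderiv ℝ (fun s => δ₀ u s z) t w := by
    intro w
    rw [fderiv_fun_sub (hdiff _ (hδsm u hu z) t ht) (hdiff _ (hδ₀sm u hu humem z) t ht)]
    rfl
  have Edb : h t (delbar (fun s => δ u s z - δ₀ u s z) t z') (v t)
      = h t (delbar (fun s => δ u s z) t z') (v t)
        - h t (delbar (fun s => δ₀ u s z) t z') (v t) := by
    have hd : delbar (fun s => δ u s z - δ₀ u s z) t z'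
        = delbar (fun s => δ u s z) t z' - delbar (fun s => δ₀ u s z) t z' := by
      simp only [delbar, hdsub]
      module
    rw [hd, hsub t ht]
  -- E5/E6 : h(∂̄w, v) = - h(w, δv)
  have hvw0 : ∀ s ∈ U, h s (v s) (δ u s z - δ₀ u s z) = 0 := by
    intro s hs
    have h0 := orth u v hu humem hv hvmem s hs z
    rw [hsymm s hs, h0]
    simp
  have E5 := hδ v (fun s => δ u s z - δ₀ u s z) hv hw_sm t ht z'
  rw [delzero _ hvw0 z'] at E5
  have E6 : h t (delbar (fun s => δ u s z - δ₀ u s z) t z') (v t)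
      = - h t (δ u t z - δ₀ u t z) (δ v t z') := by
    rw [hsymm t ht]
    have hx : h t (v t) (delbar (fun s => δ u s z - δ₀ u s z) t z')
        = - h t (δ v t z') (δ u t z - δ₀ u t z) := by linear_combination -E5
    rw [hx, map_neg, ← hsymm t ht]
  -- split and E8
  have split : h t (δ u t z - δ₀ u t z) (δ v t z' - δ₀ v t z')
      = h t (δ u t z - δ₀ u t z) (δ v t z') - h t (δ u t z - δ₀ u t z) (δ₀ v t z') :=
    hsub2 _ _ _
  have E8 : h t (δ u t z - δ₀ u t z) (δ₀ v t z') = 0 := by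
    have := orth u (fun s => δ₀ v s z') hu humem (hδ₀sm v hv hvmem z')
      (fun s hs => hδ₀mem v hv hvmem s hs z') t ht z
    exact this
  -- conclude
  simp only [curvC]
  rw [hsub t ht, hsub t ht]
  linear_combination -E3 - Edb + E6 + split - E8
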